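/- Let G be a finite simple loopless graph with at least one edge that admits a proper colouring with n colours (n ≥ 2). Then ind |Hom(K₂,G)| ≤ n−2; that is, there exists a continuous map g : |Hom(K₂,G)| → S^{n−2} such that g(α·x) = −g(x) for all x ∈ |Hom(K₂,G)|, where α·x is the involution induced by the flip involution of K₂. -/

import Mathlib

open Metric unitInterval

noncomputable section

/-- The unit sphere `S^k` in `ℝ^(k+1)`. -/
abbrev Sph (k : ℕ) : Type := Metric.sphere (0 : EuclideanSpace ℝ (Fin (k+1))) 1

/-- `φ` is a multihomomorphism from `G` to `H`. -/
def IsMultihom {V W : Type*} (G : SimpleGraph V) (H : SimpleGraph W)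
    (φ : V → Set W) : Prop :=
  (∀ v, (φ v).Nonempty) ∧ ∀ ⦃u v⦄, G.Adj u v → ∀ a ∈ φ u, ∀ b ∈ φ v, H.Adj a b

/-- The Hom space `|Hom(G,H)|`. -/
def HomSpace {V W : Type*} [Fintype W] (G : SimpleGraph V) (H : SimpleGraph W) : Type _ :=
  {x : V → stdSimplex ℝ W // IsMultihom G H fun v => {w | (x v : W → ℝ) w ≠ 0}}

instance {V W : Type*} [Fintype W] (G : SimpleGraph V) (H : SimpleGraph W) :
    TopologicalSpace (HomSpace G H) :=
  inferInstanceAs (TopologicalSpace {_x : V → stdSimplex ℝ W // _})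

/-- The map `|Hom(G,H)| → |Hom(G',H)|` induced by a graph homomorphism `κ : G' → G`;
for `G' = G` and `κ` an involution this is the induced (left) involution. -/
def pull {V V' W : Type*} [Fintype W] {G : SimpleGraph V} {G' : SimpleGraph V'}
    {H : SimpleGraph W} (κ : G' →g G) (x : HomSpace G H) : HomSpace G' H :=
  ⟨fun v => x.1 (κ v), fun v => x.2.1 (κ v), fun _ _ huv => x.2.2 (κ.map_adj huv)⟩

/-- The (right) involution of `|Hom(G,H)|` induced by an involution `β` of `H`. -/
def rightAct {V W : Type*} [Fintype W] {G : SimpleGraph V} {H : SimpleGraph W}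
    (β : H →g H) (hβ : Function.Involutive β) (x : HomSpace G H) : HomSpace G H :=
  ⟨fun v => ⟨fun b => (x.1 v : W → ℝ) (β b),
    fun b => (x.1 v).2.1 (β b),
    by
      rw [← (x.1 v).2.2]
      exact Fintype.sum_bijective β hβ.bijective _ _ fun b => rfl⟩,
   fun v => by
      obtain ⟨w, hw⟩ := x.2.1 v
      exact ⟨β w, by change (x.1 v : W → ℝ) (β (β w)) ≠ 0; simpa [hβ w] using hw⟩,
   fun u v huv a ha b hb => by
      have := x.2.2 huv (β a) ha (β b) hb
      simpa [hβ a, hβ b] using β.map_adj this⟩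

/-- The complete graph `K₂` on `{0,1}`. -/
abbrev K2 : SimpleGraph (Fin 2) := SimpleGraph.completeGraph (Fin 2)

/-- The flip involution of `K₂`. -/
def flipK2 : K2 →g K2 :=
  ⟨fun v => 1 - v, fun {a b} h => by fin_cases a <;> fin_cases b <;> simp_all⟩

/-- The cycle `C_m` on `ℤ/m`. -/
def cycle (m : ℕ) : SimpleGraph (ZMod m) where
  Adj u v := u ≠ v ∧ (u + 1 = v ∨ v + 1 = u)
  symm := ⟨fun _ _ h => ⟨h.1.symm, h.2.symm⟩⟩
  loopless := ⟨fun _ h => h.1 rfl⟩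

/-- The involution `v ↦ (m-1) - v = -1 - v` of the cycle `C_m`. -/
def cycFlip (m : ℕ) : cycle m →g cycle m :=
  ⟨fun v => -1 - v, fun {a b} h => by
    refine ⟨fun e => h.1 (sub_right_injective e), ?_⟩
    rcases h.2 with e | e
    · exact Or.inr (by rw [← e]; ring)
    · exact Or.inl (by rw [← e]; ring)⟩

/-- `X` is `m`-connected: nonempty, path-connected, and `πᵢ X` trivial for `1 ≤ i ≤ m`. -/
def MConnected (m : ℕ) (X : Type*) [TopologicalSpace X] : Prop :=
  Nonempty X ∧ PathConnectedSpace X ∧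
    ∀ i, 1 ≤ i → i ≤ m → ∀ x : X, Subsingleton (HomotopyGroup (Fin i) X x)

end

theorem hom_K2_index_le_of_colorable {V : Type*} [Fintype V] (G : SimpleGraph V)
    (hE : ∃ u v, G.Adj u v) (n : ℕ) (hn : 2 ≤ n) (hc : G.Colorable n) :
    ∃ g : HomSpace K2 G → Sph (n - 2), Continuous g ∧
      ∀ x, g (pull flipK2 x) = -(g x) := by
  classical
  obtain ⟨c⟩ := hc
  -- difference of the two pushforward distributions
  let P : HomSpace K2 G → EuclideanSpace ℝ (Fin n) := fun x => WithLp.toLp 2 fun i =>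
    ∑ v : V, if c v = i then ((x.1 0 : V → ℝ) v - (x.1 1 : V → ℝ) v) else 0
  have key : ∀ (x : HomSpace K2 G) (a b : V),
      (x.1 0 : V → ℝ) a ≠ 0 → (x.1 1 : V → ℝ) b ≠ 0 → c a ≠ c b := by
    intro x a b ha hb
    have hadj : K2.Adj 0 1 := by simp
    exact c.valid (x.2.2 hadj a ha b hb)
  have hsum : ∀ x, ∑ i, P x i = 0 := by
    intro x
    have h1 : ∑ i, P x i
        = ∑ v : V, ((x.1 0 : V → ℝ) v - (x.1 1 : V → ℝ) v) := by
      simp only [P, WithLp.ofLp_toLp]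
      rw [Finset.sum_comm]
      refine Finset.sum_congr rfl fun v _ => ?_
      simp
    rw [h1, Finset.sum_sub_distrib, stdSimplex.sum_eq_one (x.1 0), stdSimplex.sum_eq_one (x.1 1), sub_self]
  have hflip : ∀ x, P (pull flipK2 x) = -(P x) := by
    intro x
    ext i
    have h0 : flipK2 (0 : Fin 2) = 1 := by decide
    have h1 : flipK2 (1 : Fin 2) = 0 := by decide
    show (∑ v : V, if c v = i then
        (((pull flipK2 x).1 0 : V → ℝ) v - ((pull flipK2 x).1 1 : V → ℝ) v) else 0)
      = -(P x i)
    show (∑ v : V, if c v = i then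
        ((x.1 (flipK2 0) : V → ℝ) v - (x.1 (flipK2 1) : V → ℝ) v) else 0)
      = -(P x i)
    rw [h0, h1]
    rw [show -(P x i) = ∑ v : V,
        -(if c v = i then ((x.1 0 : V → ℝ) v - (x.1 1 : V → ℝ) v) else 0) from
      (Finset.sum_neg_distrib _).symm]
    refine Finset.sum_congr rfl fun v _ => ?_
    by_cases h : c v = i
    · simp only [h, if_true]; ring
    · simp [h]
  have hne : ∀ x, P x ≠ 0 := by
    intro x hx
    obtain ⟨a, ha⟩ := x.2.1 0
    have ha' : (x.1 0 : V → ℝ) a ≠ 0 := ha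
    have hzero : ∀ v, c v = c a → (x.1 1 : V → ℝ) v = 0 := by
      intro v hv
      by_contra hb
      exact key x a v ha' hb hv.symm
    have hpos : 0 < P x (c a) := by
      have heq : P x (c a)
          = ∑ v : V, (if c v = c a then (x.1 0 : V → ℝ) v else 0) := by
        simp only [P, WithLp.ofLp_toLp]
        refine Finset.sum_congr rfl fun v _ => ?_
        by_cases h : c v = c a
        · simp [h, hzero v h]
        · simp [h]
      rw [heq]
      refine Finset.sum_pos' (fun v _ => ?_) ⟨a, Finset.mem_univ a, ?_⟩
      · by_cases h : c v = c a <;> simp [h, stdSimplex.zero_le (x.1 0) v]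
      · simpa using lt_of_le_of_ne (stdSimplex.zero_le (x.1 0) a) (Ne.symm ha')
    rw [hx] at hpos
    exact lt_irrefl (0 : ℝ) hpos
  -- continuity of P
  have hQ : Continuous fun (x : HomSpace K2 G) (i : Fin n) =>
      ∑ v : V, if c v = i then ((x.1 0 : V → ℝ) v - (x.1 1 : V → ℝ) v) else 0 := by
    refine continuous_pi fun i => continuous_finset_sum _ fun v _ => ?_
    have hcoord : ∀ u : Fin 2, Continuous fun x : HomSpace K2 G => (x.1 u : V → ℝ) v :=
      fun u => (continuous_apply v).comp (continuous_subtype_val.comp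
        ((continuous_apply u).comp continuous_subtype_val))
    by_cases h : c v = i
    · simp only [h, if_true]
      exact (hcoord 0).sub (hcoord 1)
    · simp only [h, if_false]
      exact continuous_const
  have hPc : Continuous P :=
    (PiLp.continuous_toLp 2 fun _ : Fin n => ℝ).comp hQ
  -- the hyperplane of sum-zero vectors
  haveI : NeZero n := ⟨by omega⟩
  let L : EuclideanSpace ℝ (Fin n) →ₗ[ℝ] ℝ :=
    { toFun := fun f => ∑ i, f i
      map_add' := fun f g => by
        simp [PiLp.add_apply, Finset.sum_add_distrib]
      map_smul' := fun r f => by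
        simp [PiLp.smul_apply, Finset.mul_sum] }
  have hLsurj : Function.Surjective L := by
    intro r
    refine ⟨EuclideanSpace.single (0 : Fin n) r, ?_⟩
    simp [L, EuclideanSpace.single_apply]
  have hrank : Module.finrank ℝ (LinearMap.ker L) = (n - 2) + 1 := by
    have h1 := LinearMap.finrank_range_add_finrank_ker L
    rw [LinearMap.range_eq_top.mpr hLsurj, finrank_top] at h1
    simp only [Module.finrank_self, finrank_euclideanSpace_fin] at h1
    omega
  let e : (LinearMap.ker L) ≃ₗᵢ[ℝ] EuclideanSpace ℝ (Fin ((n - 2) + 1)) :=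
    ((stdOrthonormalBasis ℝ (LinearMap.ker L)).reindex (finCongr hrank)).repr
  have hker : ∀ x, P x ∈ LinearMap.ker L := fun x => by
    simpa [L, LinearMap.mem_ker] using hsum x
  let w : HomSpace K2 G → LinearMap.ker L := fun x => ⟨P x, hker x⟩
  have hwne : ∀ x, w x ≠ 0 := fun x h => hne x (congrArg Subtype.val h)
  have hwnorm : ∀ x, ‖w x‖ ≠ 0 := fun x => norm_ne_zero_iff.mpr (hwne x)
  let g : HomSpace K2 G → Sph (n - 2) := fun x =>
    ⟨e ((‖w x‖)⁻¹ • w x), by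
      rw [mem_sphere_zero_iff_norm, e.norm_map, norm_smul, norm_inv, norm_norm,
        inv_mul_cancel₀ (hwnorm x)]⟩
  refine ⟨g, ?_, ?_⟩
  · have hw : Continuous w := hPc.subtype_mk hker
    exact Continuous.subtype_mk (e.continuous.comp ((hw.norm.inv₀ hwnorm).smul hw)) _
  · intro x
    have hwf : w (pull flipK2 x) = -(w x) := by
      apply Subtype.ext
      show P (pull flipK2 x) = _
      rw [hflip x]
      rfl
    apply Subtype.ext
    show e ((‖w (pull flipK2 x)‖)⁻¹ • w (pull flipK2 x)) = ((-(g x) : Sph (n-2)) : EuclideanSpace ℝ _)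
    rw [coe_neg_sphere, hwf, norm_neg, smul_neg, map_neg]
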